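/- Let ξ₁, ξ₂, … be {-1,1}-valued random variables on a probability space with filtration F_k = σ(ξ₁,…,ξ_k), and let S_k = s exp(σ n^{-1/2} Σ_{i=1}^k ξ_i). Suppose Q is a probability measure such that E_Q[S_{k+1} - S_k | F_{(k-H)⁺}] = 0 for all 0 ≤ k ≤ n-1. Then for every H ≤ k ≤ n-1, |E_Q[ξ_{k+1} | F_{k-H}]| ≤ C/√n for some constant C depending only on σ and H. -/

import Mathlib

open MeasureTheory Finset Real

set_option maxHeartbeats 1000000

section Aux

variable {Ω : Type} {mΩ : MeasurableSpace Ω} {Q : Measure Ω}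

/-- bounded measurable functions are integrable w.r.t. a probability measure -/
lemma bdd_integrable [IsProbabilityMeasure Q] (f : Ω → ℝ) (c : ℝ)
    (hf : Measurable f) (hb : ∀ ω, |f ω| ≤ c) : Integrable f Q :=
  (integrable_const c).mono' hf.aestronglyMeasurable
    (Filter.Eventually.of_forall fun ω => by simpa [Real.norm_eq_abs] using hb ω)

end Aux

/-- `cosh a - 1 ≤ a * sinh a` for `a ≥ 0`. -/
lemma cosh_sub_one_le (a : ℝ) (ha : 0 ≤ a) : Real.cosh a - 1 ≤ a * Real.sinh a := by
  rw [Real.cosh_eq, Real.sinh_eq]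
  have h1 : (-a) + 1 ≤ Real.exp (-a) := Real.add_one_le_exp (-a)
  have h2 : a + 1 ≤ Real.exp a := Real.add_one_le_exp a
  have h3 : Real.exp (-a) * Real.exp a = 1 := by
    rw [← Real.exp_add]; simp
  have h4 : Real.exp (-a) ≤ 1 := by
    rw [Real.exp_le_one_iff]; linarith
  nlinarith [Real.exp_pos a, Real.exp_pos (-a), mul_nonneg ha (sub_nonneg.mpr h4),
    mul_nonneg (sub_nonneg.mpr h4) (sub_nonneg.mpr (by linarith : (1:ℝ) ≤ Real.exp a))]

/-- `exp x - 1 ≤ x * exp x` for `x ≥ 0`. -/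
lemma exp_sub_one_le_mul (x : ℝ) (hx : 0 ≤ x) : Real.exp x - 1 ≤ x * Real.exp x := by
  have h1 : (-x) + 1 ≤ Real.exp (-x) := Real.add_one_le_exp (-x)
  have h3 : Real.exp (-x) * Real.exp x = 1 := by rw [← Real.exp_add]; simp
  nlinarith [Real.exp_pos x]

/-- `1 - exp (-x) ≤ exp x - 1`. -/
lemma one_sub_exp_neg_le (x : ℝ) : 1 - Real.exp (-x) ≤ Real.exp x - 1 := by
  have h1 : (-x) + 1 ≤ Real.exp (-x) := Real.add_one_le_exp (-x)
  have h2 : x + 1 ≤ Real.exp x := Real.add_one_le_exp x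
  linarith

/-- in the `n`-step binomial model with delay `H`, if `Q` satisfies the
delayed martingale condition `E_Q[S_{k+1} - S_k | F_{(k-H)⁺}] = 0`, then
`|E_Q[ξ_{k+1} | F_{k-H}]| ≤ C/√n` for `H ≤ k ≤ n-1`, with `C` depending only on `σ, H`. -/
theorem delayed_martingale_centering (σ : ℝ) (hσ : 0 < σ) (H : ℕ) :
    ∃ C : ℝ, 0 < C ∧
      ∀ (Ω : Type) (mΩ : MeasurableSpace Ω) (Q : Measure Ω), IsProbabilityMeasure Q →
      ∀ (n : ℕ), σ ^ 2 ≤ (n : ℝ) →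
      ∀ (s : ℝ), 0 < s →
      ∀ (F : ℕ → MeasurableSpace Ω) (ξ : ℕ → Ω → ℝ),
        Monotone F → (∀ k, F k ≤ mΩ) →
        (∀ i, Measurable[F i] (ξ i)) →
        (∀ i ω, ξ i ω = 1 ∨ ξ i ω = -1) →
        (∀ k, k < n →
          Q[(fun ω => s * Real.exp (σ / Real.sqrt n * ∑ i ∈ Finset.Icc 1 (k + 1), ξ i ω)
              - s * Real.exp (σ / Real.sqrt n * ∑ i ∈ Finset.Icc 1 k, ξ i ω)) | F (k - H)]
            =ᵐ[Q] 0) →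
        ∀ k, H ≤ k → k + 1 ≤ n →
          ∀ᵐ ω ∂Q, |(Q[ξ (k + 1) | F (k - H)]) ω| ≤ C / Real.sqrt n := by
  refine ⟨2 * σ * ((H : ℝ) + 1) * Real.exp ((H : ℝ) + 1), by positivity, ?_⟩
  intro Ω mΩ Q hQ n hn s hs F ξ hF hFm hξm hξpm hmart k hHk hkn
  -- basic facts about n and a := σ / √n
  have hn0 : 0 < (n : ℝ) := lt_of_lt_of_le (by positivity) hn
  have hsqn : 0 < Real.sqrt n := Real.sqrt_pos.mpr hn0
  set a : ℝ := σ / Real.sqrt n with ha_def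
  have ha : 0 < a := div_pos hσ hsqn
  have ha1 : a ≤ 1 := by
    rw [ha_def, div_le_one hsqn]
    exact (Real.le_sqrt hσ.le hn0.le).mpr hn
  -- measurability of the ξ's
  have hξms : ∀ i, Measurable (ξ i) := fun i => (hξm i).mono (hFm i) le_rfl
  have hξbd : ∀ i ω, |ξ i ω| ≤ 1 := by
    intro i ω; rcases hξpm i ω with h | h <;> rw [h] <;> norm_num
  -- the sums and their bounds
  have hsum_meas : ∀ p q : ℕ, Measurable fun ω => ∑ i ∈ Icc p q, ξ i ω :=
    fun p q => Finset.measurable_sum _ fun i _ => hξms i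
  have hsum_bd : ∀ (p q : ℕ) ω, |∑ i ∈ Icc p q, ξ i ω| ≤ ((Icc p q).card : ℝ) := by
    intro p q ω
    refine le_trans (Finset.abs_sum_le_sum_abs _ _) ?_
    have := Finset.sum_le_card_nsmul (Icc p q) (fun i => |ξ i ω|) 1
      (fun i _ => hξbd i ω)
    simpa using this
  have hsum_up : ∀ (p q : ℕ) ω, a * ∑ i ∈ Icc p q, ξ i ω ≤ ((Icc p q).card : ℝ) := by
    intro p q ω
    have h := abs_le.mp (hsum_bd p q ω)
    nlinarith [abs_nonneg (∑ i ∈ Icc p q, ξ i ω), h.1, h.2, abs_le.mp (hsum_bd p q ω)]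
  -- main objects
  set ξ' : Ω → ℝ := ξ (k + 1) with hξ'_def
  set R : Ω → ℝ := fun ω => Real.exp (a * ∑ i ∈ Icc (k - H + 1) k, ξ i ω) with hR_def
  set S₀ : Ω → ℝ := fun ω => s * Real.exp (a * ∑ i ∈ Icc 1 (k - H), ξ i ω) with hS₀_def
  set E : ℝ := Real.exp (a * (H : ℝ)) with hE_def
  have hE1 : 1 ≤ E := Real.one_le_exp (by positivity)
  -- cardinalities
  have hcard1 : ((Icc (k - H + 1) k).card : ℝ) = (H : ℝ) := by
    rw [Nat.card_Icc]; norm_cast; omega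
  -- bounds on R
  have hRpos : ∀ ω, 0 < R ω := fun ω => Real.exp_pos _
  have hRle : ∀ ω, R ω ≤ E := by
    intro ω
    apply Real.exp_le_exp.mpr
    have h1 := (abs_le.mp (hsum_bd (k - H + 1) k ω)).2
    rw [hcard1] at h1
    exact mul_le_mul_of_nonneg_left h1 ha.le
  have hRge : ∀ ω, Real.exp (-(a * (H : ℝ))) ≤ R ω := by
    intro ω
    apply Real.exp_le_exp.mpr
    have h1 := (abs_le.mp (hsum_bd (k - H + 1) k ω)).1
    rw [hcard1] at h1
    nlinarith
  have hR1bd : ∀ ω, |1 - R ω| ≤ E - 1 := by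
    intro ω
    rw [abs_le]
    constructor
    · have := hRle ω; linarith
    · have h1 := hRge ω
      have h2 := one_sub_exp_neg_le (a * (H : ℝ))
      rw [← hE_def] at h2; linarith
  -- measurability
  have hRmeas : Measurable R := ((hsum_meas _ _).const_mul a).exp
  have hξ'meas : Measurable ξ' := hξms (k + 1)
  have hS₀m : StronglyMeasurable[F (k - H)] S₀ := by
    have hs0 : Measurable[F (k - H)] fun ω => ∑ i ∈ Icc 1 (k - H), ξ i ω :=
      Finset.measurable_sum _ fun i hi =>
        (hξm i).mono (hF (Finset.mem_Icc.mp hi).2) le_rfl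
    exact (((hs0.const_mul a).exp).const_mul s).stronglyMeasurable
  -- decomposition of the increment
  have hsplit : ∀ ω, (∑ i ∈ Icc 1 k, ξ i ω)
      = (∑ i ∈ Icc 1 (k - H), ξ i ω) + ∑ i ∈ Icc (k - H + 1) k, ξ i ω := by
    intro ω
    rw [show Icc 1 k = Ioc 0 k from Finset.Icc_add_one_left_eq_Ioc 0 k,
      show Icc 1 (k - H) = Ioc 0 (k - H) from Finset.Icc_add_one_left_eq_Ioc 0 _,
      show Icc (k - H + 1) k = Ioc (k - H) k from Finset.Icc_add_one_left_eq_Ioc _ _]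
    exact (Finset.sum_Ioc_consecutive _ (Nat.zero_le _) (Nat.sub_le k H)).symm
  have hsplit1 : ∀ ω, (∑ i ∈ Icc 1 (k + 1), ξ i ω)
      = (∑ i ∈ Icc 1 k, ξ i ω) + ξ' ω := fun ω =>
    Finset.sum_Icc_succ_top (Nat.succ_le_succ (Nat.zero_le k)) _
  set g' : Ω → ℝ :=
    fun ω => (Real.cosh a - 1) * R ω + Real.sinh a * (R ω * ξ' ω) with hg'_def
  have hdiff : (fun ω => s * Real.exp (a * ∑ i ∈ Icc 1 (k + 1), ξ i ω)
      - s * Real.exp (a * ∑ i ∈ Icc 1 k, ξ i ω)) = fun ω => S₀ ω * g' ω := by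
    funext ω
    have hx : Real.exp (a * ξ' ω) = Real.cosh a + Real.sinh a * ξ' ω := by
      rcases hξpm (k + 1) ω with h | h <;> rw [hξ'_def, h]
      · rw [mul_one, ← Real.cosh_add_sinh]; ring
      · rw [mul_neg_one, ← Real.cosh_sub_sinh]; ring
    rw [hsplit1 ω, hsplit ω, mul_add, mul_add, Real.exp_add, Real.exp_add, hx]
    simp only [hS₀_def, hg'_def, hR_def]
    ring
  -- integrability
  have hintR : Integrable R Q := bdd_integrable R E hRmeas fun ω =>
    (abs_of_pos (hRpos ω)).symm ▸ hRle ω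
  have hξ'1 : ∀ ω, |ξ' ω| ≤ 1 := hξbd (k + 1)
  have hintRξ : Integrable (fun ω => R ω * ξ' ω) Q := by
    refine bdd_integrable _ E (hRmeas.mul hξ'meas) fun ω => ?_
    rw [abs_mul]
    calc |R ω| * |ξ' ω| ≤ E * 1 :=
          mul_le_mul ((abs_of_pos (hRpos ω)).symm ▸ hRle ω) (hξ'1 ω)
            (abs_nonneg _) (by linarith)
      _ = E := mul_one E
  have hintξ' : Integrable ξ' Q := bdd_integrable _ 1 hξ'meas hξ'1
  set D : Ω → ℝ := fun ω => ξ' ω - R ω * ξ' ω with hD_def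
  have hDbd : ∀ ω, |D ω| ≤ E - 1 := by
    intro ω
    rw [hD_def]
    have h0 : ξ' ω - R ω * ξ' ω = (1 - R ω) * ξ' ω := by ring
    simp only [h0]
    rw [abs_mul]
    calc |1 - R ω| * |ξ' ω| ≤ (E - 1) * 1 :=
          mul_le_mul (hR1bd ω) (hξ'1 ω) (abs_nonneg _) (by linarith)
      _ = E - 1 := mul_one _
  have hintD : Integrable D Q := hintξ'.sub hintRξ
  have hintg' : Integrable g' Q :=
    (hintR.const_mul _).add (hintRξ.const_mul _)
  have hintS₀g' : Integrable (fun ω => S₀ ω * g' ω) Q := by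
    rw [← hdiff]
    refine (bdd_integrable _ (s * Real.exp ((k : ℝ) + 1))
        (((hsum_meas 1 (k + 1)).const_mul a).exp.const_mul s) ?_).sub
      (bdd_integrable _ (s * Real.exp ((k : ℝ) + 1))
        (((hsum_meas 1 k).const_mul a).exp.const_mul s) ?_)
    all_goals
      intro ω
      rw [abs_mul, abs_of_pos hs, abs_of_pos (Real.exp_pos _)]
      refine mul_le_mul_of_nonneg_left (Real.exp_le_exp.mpr ?_) hs.le
    · refine le_trans (hsum_up 1 (k + 1) ω) ?_
      rw [Nat.card_Icc]; push_cast [Nat.add_sub_cancel]; linarith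
    · refine le_trans (hsum_up 1 k ω) ?_
      rw [Nat.card_Icc]; push_cast [Nat.add_sub_cancel]; linarith
  -- the martingale condition, rewritten
  have hmart' := hmart k (by omega)
  rw [hdiff] at hmart'
  -- pull out S₀
  have hpull : Q[fun ω => S₀ ω * g' ω | F (k - H)]
      =ᵐ[Q] fun ω => S₀ ω * (Q[g' | F (k - H)]) ω :=
    condExp_mul_of_stronglyMeasurable_left hS₀m hintS₀g' hintg'
  have hg'0 : Q[g' | F (k - H)] =ᵐ[Q] 0 := by
    filter_upwards [hmart', hpull] with ω h1 h2
    have hS₀pos : 0 < S₀ ω := by rw [hS₀_def]; positivity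
    have h3 : S₀ ω * (Q[g' | F (k - H)]) ω = 0 := by
      rw [← h2]; simpa using h1
    simpa using (mul_eq_zero.mp h3).resolve_left (ne_of_gt hS₀pos)
  -- linearity of the conditional expectation
  have hg'decomp : g' = ((Real.cosh a - 1) • R)
      + ((Real.sinh a) • fun ω => R ω * ξ' ω) := by
    funext ω
    simp [hg'_def, Pi.add_apply, Pi.smul_apply, smul_eq_mul]
  rw [hg'decomp] at hg'0
  have h2 := condExp_add (μ := Q) (m := F (k - H))
    (hintR.smul (Real.cosh a - 1)) (hintRξ.smul (Real.sinh a))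
  have h3 := condExp_smul (μ := Q) (m := F (k - H)) (Real.cosh a - 1) R
  have h4 := condExp_smul (μ := Q) (m := F (k - H)) (Real.sinh a)
    (fun ω => R ω * ξ' ω)
  have hA : ∀ᵐ ω ∂Q, (Real.cosh a - 1) * (Q[R | F (k - H)]) ω
      + Real.sinh a * (Q[fun ω => R ω * ξ' ω | F (k - H)]) ω = 0 := by
    filter_upwards [hg'0, h2, h3, h4] with ω e0 e2 e3 e4
    simp only [Pi.add_apply, Pi.smul_apply, smul_eq_mul, Pi.zero_apply] at e0 e2 e3 e4
    rw [e2, e3, e4] at e0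
    linarith
  -- ξ' = D + R ξ'
  have hxi_decomp : ξ' = D + fun ω => R ω * ξ' ω := by
    funext ω; simp [hD_def]
  have hExi : Q[ξ' | F (k - H)]
      =ᵐ[Q] Q[D | F (k - H)] + Q[fun ω => R ω * ξ' ω | F (k - H)] := by
    conv_lhs => rw [hxi_decomp]
    exact condExp_add hintD hintRξ _
  -- bounds on conditional expectations
  have hB : ∀ᵐ ω ∂Q, (Q[R | F (k - H)]) ω ≤ E := by
    have h1 := condExp_mono (μ := Q) (m := F (k - H)) hintR (integrable_const E)
      (Filter.Eventually.of_forall hRle)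
    have h2 : Q[(fun _ : Ω => E) | F (k - H)] = fun _ => E :=
      condExp_const (hFm (k - H)) E
    filter_upwards [h1] with ω hω
    rwa [h2] at hω
  have hB' : ∀ᵐ ω ∂Q, 0 ≤ (Q[R | F (k - H)]) ω := by
    have := condExp_nonneg (μ := Q) (m := F (k - H))
      (Filter.Eventually.of_forall fun ω => (hRpos ω).le : (0 : Ω → ℝ) ≤ᵐ[Q] R)
    filter_upwards [this] with ω hω
    simpa using hω
  have hC : ∀ᵐ ω ∂Q, |(Q[D | F (k - H)]) ω| ≤ E - 1 := by
    have hup := condExp_mono (μ := Q) (m := F (k - H)) hintD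
      (integrable_const (E - 1))
      (Filter.Eventually.of_forall fun ω => (abs_le.mp (hDbd ω)).2)
    have hlow := condExp_mono (μ := Q) (m := F (k - H))
      (integrable_const (-(E - 1))) hintD
      (Filter.Eventually.of_forall fun ω => (abs_le.mp (hDbd ω)).1)
    have hc1 : Q[(fun _ : Ω => E - 1) | F (k - H)] = fun _ => E - 1 :=
      condExp_const (hFm (k - H)) _
    have hc2 : Q[(fun _ : Ω => -(E - 1)) | F (k - H)] = fun _ => -(E - 1) :=
      condExp_const (hFm (k - H)) _
    filter_upwards [hup, hlow] with ω h1 h2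
    rw [hc1] at h1; rw [hc2] at h2
    exact abs_le.mpr ⟨h2, h1⟩
  -- numeric conclusion
  have hsinh : 0 < Real.sinh a := Real.sinh_pos_iff.mpr ha
  have hcosh1 : 1 ≤ Real.cosh a := Real.one_le_cosh a
  have hch : Real.cosh a - 1 ≤ a * Real.sinh a := cosh_sub_one_le a ha.le
  have hEH : E ≤ Real.exp ((H : ℝ) + 1) := by
    rw [hE_def]
    exact Real.exp_le_exp.mpr (by nlinarith [Nat.cast_nonneg (α := ℝ) H])
  have hE2 : E - 1 ≤ a * (H : ℝ) * E := by
    rw [hE_def]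
    exact exp_sub_one_le_mul _ (by positivity)
  filter_upwards [hA, hB, hB', hC, hExi] with ω e1 e2 e3 e4 e5
  rw [show 2 * σ * ((H : ℝ) + 1) * Real.exp ((H : ℝ) + 1) / Real.sqrt n
      = 2 * ((H : ℝ) + 1) * Real.exp ((H : ℝ) + 1) * a by rw [ha_def]; ring]
  have e5' : (Q[ξ' | F (k - H)]) ω = (Q[D | F (k - H)]) ω
      + (Q[fun ω => R ω * ξ' ω | F (k - H)]) ω := by simpa using e5
  set r := (Q[R | F (k - H)]) ω with hr_def
  set q := (Q[fun ω => R ω * ξ' ω | F (k - H)]) ω with hq_def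
  set d := (Q[D | F (k - H)]) ω with hd_def
  clear_value r q d
  have hq : |q| ≤ a * E := by
    have hqn : q ≤ 0 := by nlinarith
    rw [abs_of_nonpos hqn]
    have t1 : (Real.cosh a - 1) * r ≤ (Real.cosh a - 1) * E :=
      mul_le_mul_of_nonneg_left e2 (by linarith)
    have t2 : (Real.cosh a - 1) * E ≤ a * Real.sinh a * E :=
      mul_le_mul_of_nonneg_right hch (by linarith)
    nlinarith
  have hx : |(Q[ξ' | F (k - H)]) ω| ≤ |d| + |q| := by
    rw [e5']; exact abs_add_le _ _
  have hfin : |d| + |q| ≤ 2 * ((H : ℝ) + 1) * Real.exp ((H : ℝ) + 1) * a := by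
    have hHn : (0 : ℝ) ≤ (H : ℝ) := Nat.cast_nonneg H
    nlinarith [mul_le_mul_of_nonneg_left hEH
      (show (0 : ℝ) ≤ a * ((H : ℝ) + 1) by positivity),
      Real.exp_pos ((H : ℝ) + 1)]
  exact le_trans hx hfin
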